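/- Let Π be a Label Cover instance with bipartite constraint graph on vertex sets A, B with |A| = |B| = n, where every vertex has degree exactly D. Let γ > 0, and suppose val(Π) < γ. Then every multilabeling ψ of Π with total cost Σ_v |ψ(v)| ≤ 0.12n/√γ satisfies strictly less than half of the edges. -/

import Mathlib

open Finset

set_option maxHeartbeats 1000000

/-- Soundness conversion (Proposition `max-to-min`): in a `D`-regular Label Cover
instance with `|A| = |B| = n` and `val(Π) < γ`, every multilabeling of cost at most
`0.12 n / √γ` satisfies strictly less than half of the edges. -/
theorem stmt_3 {A B Lab : Type} [Fintype A] [Fintype B] [Fintype Lab]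
    [DecidableEq A] [DecidableEq B] [DecidableEq Lab]
    (E : Finset (A × B)) (π : A × B → Lab → Lab)
    (n D : ℕ) (hn : 0 < n) (hD : 0 < D)
    (hA : Fintype.card A = n) (hB : Fintype.card B = n)
    (hdegA : ∀ a : A, (E.filter fun e => e.1 = a).card = D)
    (hdegB : ∀ b : B, (E.filter fun e => e.2 = b).card = D)
    (hLab : Nonempty Lab) (γ : ℝ) (hγ : 0 < γ)
    (hval : ∀ φ : (A ⊕ B) → Lab,
      ((E.filter fun e => π e (φ (Sum.inl e.1)) = φ (Sum.inr e.2)).card : ℝ) / E.card < γ)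
    (ψ : A ⊕ B → Finset Lab)
    (hcost : (∑ v, ((ψ v).card : ℝ)) ≤ 0.12 * n / Real.sqrt γ) :
    ((E.filter fun e => ∃ σ ∈ ψ (Sum.inl e.1), π e σ ∈ ψ (Sum.inr e.2)).card : ℝ)
      < 0.5 * E.card := by
  classical
  by_contra hcon
  push_neg at hcon
  haveI instSat : DecidablePred (fun e : A × B => ∃ σ ∈ ψ (Sum.inl e.1), π e σ ∈ ψ (Sum.inr e.2)) :=
    fun e => Fintype.decidableExistsFintype
  have hcon' : 0.5 * (E.card : ℝ) ≤
      ((E.filter fun e => ∃ σ ∈ ψ (Sum.inl e.1), π e σ ∈ ψ (Sum.inr e.2)).card : ℝ) := by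
    convert hcon using 4
    rfl
  clear hcon
  set Sat := E.filter (fun e => ∃ σ ∈ ψ (Sum.inl e.1), π e σ ∈ ψ (Sum.inr e.2)) with hSatdef
  clear_value Sat
  -- |E| = n * D
  have hEcard : E.card = n * D := by
    rw [Finset.card_eq_sum_card_fiberwise (f := Prod.fst) (t := Finset.univ)
      (fun x _ => mem_univ _)]
    simp only [hdegA, sum_const, card_univ, hA, smul_eq_mul]
  have hsq : (0:ℝ) < Real.sqrt γ := Real.sqrt_pos.mpr hγ
  set t : ℝ := 1 / (2 * Real.sqrt γ) with htdef
  clear_value t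
  have ht0 : 0 < t := by rw [htdef]; positivity
  set BigA := Finset.univ.filter (fun a : A => t < ((ψ (Sum.inl a)).card : ℝ)) with hBigAdef
  clear_value BigA
  set BigB := Finset.univ.filter (fun b : B => t < ((ψ (Sum.inr b)).card : ℝ)) with hBigBdef
  clear_value BigB
  -- Markov: few big vertices
  have hBig : ((BigA.card : ℝ) + BigB.card) ≤ 0.24 * n := by
    have h1 : t * BigA.card ≤ ∑ a : A, ((ψ (Sum.inl a)).card : ℝ) := by
      calc t * BigA.card = ∑ _a ∈ BigA, t := by rw [sum_const, nsmul_eq_mul]; ring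
      _ ≤ ∑ a ∈ BigA, ((ψ (Sum.inl a)).card : ℝ) := by
          refine Finset.sum_le_sum fun a ha => ?_
          rw [hBigAdef] at ha
          exact le_of_lt (mem_filter.mp ha).2
      _ ≤ ∑ a : A, ((ψ (Sum.inl a)).card : ℝ) := by
          refine Finset.sum_le_sum_of_subset_of_nonneg (subset_univ _) fun _ _ _ => ?_
          positivity
    have h2 : t * BigB.card ≤ ∑ b : B, ((ψ (Sum.inr b)).card : ℝ) := by
      calc t * BigB.card = ∑ _b ∈ BigB, t := by rw [sum_const, nsmul_eq_mul]; ring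
      _ ≤ ∑ b ∈ BigB, ((ψ (Sum.inr b)).card : ℝ) := by
          refine Finset.sum_le_sum fun b hb => ?_
          rw [hBigBdef] at hb
          exact le_of_lt (mem_filter.mp hb).2
      _ ≤ ∑ b : B, ((ψ (Sum.inr b)).card : ℝ) := by
          refine Finset.sum_le_sum_of_subset_of_nonneg (subset_univ _) fun _ _ _ => ?_
          positivity
    have hsplit : (∑ v, ((ψ v).card : ℝ))
        = (∑ a : A, ((ψ (Sum.inl a)).card : ℝ)) + ∑ b : B, ((ψ (Sum.inr b)).card : ℝ) :=
      Fintype.sum_sum_type _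
    have hcost' : t * ((BigA.card : ℝ) + BigB.card) ≤ 0.24 * n * t := by
      have heq : 0.12 * n / Real.sqrt γ = 0.24 * n * t := by
        rw [htdef]; field_simp; ring
      rw [mul_add]
      linarith [h1, h2, hcost, hsplit, heq.le, heq.symm.le]
    have h' : t * ((BigA.card : ℝ) + BigB.card) ≤ t * (0.24 * n) := by
      linear_combination hcost'
    exact le_of_mul_le_mul_left h' ht0
  -- edges touching big vertices
  have hbadA : ((E.filter fun e => e.1 ∈ BigA).card : ℝ) ≤ D * BigA.card := by
    rw [Finset.card_eq_sum_card_fiberwise (f := Prod.fst) (s := E.filter fun e => e.1 ∈ BigA) (t := BigA)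
      (fun x hx => (mem_filter.mp hx).2)]
    push_cast
    calc (∑ a ∈ BigA, ((((E.filter fun e => e.1 ∈ BigA).filter fun e => e.1 = a).card : ℝ)))
        ≤ ∑ a ∈ BigA, ((E.filter fun e => e.1 = a).card : ℝ) := by
          refine Finset.sum_le_sum fun a _ => ?_
          exact_mod_cast Finset.card_le_card (by
            intro e he
            simp only [mem_filter] at he ⊢
            exact ⟨(he.1).1, he.2⟩)
      _ = ∑ _a ∈ BigA, (D : ℝ) := by
          refine Finset.sum_congr rfl fun a _ => ?_; rw [hdegA]
      _ = D * BigA.card := by rw [sum_const, nsmul_eq_mul]; ring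
  have hbadB : ((E.filter fun e => e.2 ∈ BigB).card : ℝ) ≤ D * BigB.card := by
    rw [Finset.card_eq_sum_card_fiberwise (f := Prod.snd) (s := E.filter fun e => e.2 ∈ BigB) (t := BigB)
      (fun x hx => (mem_filter.mp hx).2)]
    push_cast
    calc (∑ b ∈ BigB, ((((E.filter fun e => e.2 ∈ BigB).filter fun e => e.2 = b).card : ℝ)))
        ≤ ∑ b ∈ BigB, ((E.filter fun e => e.2 = b).card : ℝ) := by
          refine Finset.sum_le_sum fun b _ => ?_
          exact_mod_cast Finset.card_le_card (by
            intro e he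
            simp only [mem_filter] at he ⊢
            exact ⟨(he.1).1, he.2⟩)
      _ = ∑ _b ∈ BigB, (D : ℝ) := by
          refine Finset.sum_congr rfl fun b _ => ?_; rw [hdegB]
      _ = D * BigB.card := by rw [sum_const, nsmul_eq_mul]; ring
  -- good edges
  set Eg := Sat.filter (fun e => e.1 ∉ BigA ∧ e.2 ∉ BigB) with hEgdef
  clear_value Eg
  have hSatE : Sat ⊆ E := by rw [hSatdef]; exact Finset.filter_subset _ _
  have hEgsub : Eg ⊆ E := by
    rw [hEgdef]; exact (Finset.filter_subset _ _).trans hSatE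
  have hSatsplit : Sat.card ≤ Eg.card + ((E.filter fun e => e.1 ∈ BigA).card
      + (E.filter fun e => e.2 ∈ BigB).card) := by
    calc Sat.card ≤ (Eg ∪ ((E.filter fun e => e.1 ∈ BigA) ∪ (E.filter fun e => e.2 ∈ BigB))).card := by
          refine Finset.card_le_card fun e he => ?_
          have heE : e ∈ E := hSatE he
          by_cases h1 : e.1 ∈ BigA
          · exact Finset.mem_union_right _ (Finset.mem_union_left _ (mem_filter.mpr ⟨heE, h1⟩))
          by_cases h2 : e.2 ∈ BigB
          · exact Finset.mem_union_right _ (Finset.mem_union_right _ (mem_filter.mpr ⟨heE, h2⟩))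
          · refine Finset.mem_union_left _ ?_
            rw [hEgdef]
            exact mem_filter.mpr ⟨he, h1, h2⟩
      _ ≤ Eg.card + ((E.filter fun e => e.1 ∈ BigA) ∪ (E.filter fun e => e.2 ∈ BigB)).card :=
          Finset.card_union_le _ _
      _ ≤ Eg.card + ((E.filter fun e => e.1 ∈ BigA).card + (E.filter fun e => e.2 ∈ BigB).card) :=
          Nat.add_le_add_left (Finset.card_union_le _ _) _
  have hEg : (0.26 : ℝ) * (n * D) ≤ Eg.card := by
    have h1 : (Sat.card : ℝ) ≤ Eg.card + (D * BigA.card + D * BigB.card) := by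
      have hthis : ((Sat.card : ℕ) : ℝ) ≤ ((Eg.card + ((E.filter fun e => e.1 ∈ BigA).card
          + (E.filter fun e => e.2 ∈ BigB).card) : ℕ) : ℝ) := Nat.cast_le.mpr hSatsplit
      push_cast at hthis
      linarith [hbadA, hbadB]
    have h2 : (0.5 : ℝ) * ((n:ℝ) * D) ≤ Sat.card := by
      rw [hEcard] at hcon'
      push_cast at hcon'
      linarith
    have h3 : (D:ℝ) * ((BigA.card : ℝ) + BigB.card) ≤ (D:ℝ) * (0.24 * n) :=
      mul_le_mul_of_nonneg_left hBig (Nat.cast_nonneg D)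
    nlinarith [h3, (by exact_mod_cast hD : (0:ℝ) < (D:ℝ))]
  -- the product space of labelings
  set ψ' : (A ⊕ B) → Finset Lab :=
    fun v => if (ψ v).Nonempty then ψ v else {hLab.some} with hψ'def
  clear_value ψ'
  have hψ'ne : ∀ v, (ψ' v).Nonempty := by
    intro v
    by_cases h : (ψ v).Nonempty
    · rw [hψ'def]; simpa [if_pos h] using h
    · rw [hψ'def]; simp only [if_neg h]; exact Finset.singleton_nonempty _
  set Φ := Fintype.piFinset ψ' with hΦdef
  clear_value Φ
  set P := ∏ v, (ψ' v).card with hPdef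
  clear_value P
  have hΦcard : Φ.card = P := by rw [hΦdef, hPdef]; exact Fintype.card_piFinset ψ'
  have hP0 : 0 < P := by
    rw [hPdef]; exact Finset.prod_pos fun v _ => Finset.card_pos.mpr (hψ'ne v)
  -- per-good-edge counting
  have hedge : ∀ e ∈ Eg,
      (4 : ℝ) * γ * P ≤ ((Φ.filter fun φ => π e (φ (Sum.inl e.1)) = φ (Sum.inr e.2)).card : ℝ) := by
    intro e he
    rw [hEgdef] at he
    obtain ⟨heSat, hsmallA, hsmallB⟩ := mem_filter.mp he
    rw [hSatdef] at heSat
    obtain ⟨heE, σ, hσ, hπσ⟩ := mem_filter.mp heSat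
    have hσne : (ψ (Sum.inl e.1)).Nonempty := ⟨σ, hσ⟩
    have hτne : (ψ (Sum.inr e.2)).Nonempty := ⟨_, hπσ⟩
    have hψ'a : ψ' (Sum.inl e.1) = ψ (Sum.inl e.1) := by
      rw [hψ'def]; exact if_pos hσne
    have hψ'b : ψ' (Sum.inr e.2) = ψ (Sum.inr e.2) := by
      rw [hψ'def]; exact if_pos hτne
    set ca := (ψ (Sum.inl e.1)).card with hca
    clear_value ca
    set cb := (ψ (Sum.inr e.2)).card with hcb
    clear_value cb
    have hca1 : 1 ≤ ca := by rw [hca]; exact Finset.card_pos.mpr hσne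
    have hcb1 : 1 ≤ cb := by rw [hcb]; exact Finset.card_pos.mpr hτne
    have hcat : (ca : ℝ) ≤ t := by
      by_contra h
      refine hsmallA ?_
      rw [hBigAdef]
      refine mem_filter.mpr ⟨mem_univ _, ?_⟩
      rw [← hca]
      exact lt_of_not_ge h
    have hcbt : (cb : ℝ) ≤ t := by
      by_contra h
      refine hsmallB ?_
      rw [hBigBdef]
      refine mem_filter.mpr ⟨mem_univ _, ?_⟩
      rw [← hcb]
      exact lt_of_not_ge h
    set δ : (A ⊕ B) → Finset Lab := fun v =>
      if v = Sum.inl e.1 then {σ} else if v = Sum.inr e.2 then {π e σ} else ψ' v with hδdef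
    clear_value δ
    have hδa : δ (Sum.inl e.1) = {σ} := by rw [hδdef]; exact if_pos rfl
    have hδb : δ (Sum.inr e.2) = {π e σ} := by
      simp only [hδdef]
      rw [if_neg Sum.inr_ne_inl]
      simp
    have hδo : ∀ v, v ≠ Sum.inl e.1 → v ≠ Sum.inr e.2 → δ v = ψ' v := by
      intro v h1 h2
      simp only [hδdef]
      rw [if_neg h1]
      exact if_neg h2
    have hsub : Fintype.piFinset δ ⊆
        Φ.filter fun φ => π e (φ (Sum.inl e.1)) = φ (Sum.inr e.2) := by
      intro φ hφ
      rw [Fintype.mem_piFinset] at hφ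
      have hφa : φ (Sum.inl e.1) = σ := by
        have h := hφ (Sum.inl e.1); rw [hδa, mem_singleton] at h; exact h
      have hφb : φ (Sum.inr e.2) = π e σ := by
        have h := hφ (Sum.inr e.2); rw [hδb, mem_singleton] at h; exact h
      refine mem_filter.mpr ⟨?_, by rw [hφa, hφb]⟩
      rw [hΦdef]
      refine Fintype.mem_piFinset.mpr fun v => ?_
      have hv := hφ v
      by_cases h1 : v = Sum.inl e.1
      · subst h1; rw [hψ'a]; rw [hδa, mem_singleton] at hv; rw [hv]; exact hσ
      by_cases h2 : v = Sum.inr e.2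
      · subst h2; rw [hψ'b]; rw [hδb, mem_singleton] at hv; rw [hv]; exact hπσ
      · rwa [hδo v h1 h2] at hv
    have hδcard : (Fintype.piFinset δ).card * (ca * cb) = P := by
      rw [Fintype.card_piFinset, hPdef]
      have hmemb : Sum.inr e.2 ∈ (Finset.univ : Finset (A ⊕ B)).erase (Sum.inl e.1) :=
        Finset.mem_erase.mpr ⟨Sum.inr_ne_inl, mem_univ _⟩
      have hsplitδ : (∏ v, (δ v).card) =
          (δ (Sum.inl e.1)).card * ((δ (Sum.inr e.2)).card *
            ∏ v ∈ ((Finset.univ.erase (Sum.inl e.1)).erase (Sum.inr e.2)), (δ v).card) := by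
        rw [← Finset.mul_prod_erase _ _ (mem_univ (Sum.inl e.1)),
            ← Finset.mul_prod_erase _ _ hmemb]
      have hsplitψ : (∏ v, (ψ' v).card) =
          (ψ' (Sum.inl e.1)).card * ((ψ' (Sum.inr e.2)).card *
            ∏ v ∈ ((Finset.univ.erase (Sum.inl e.1)).erase (Sum.inr e.2)), (ψ' v).card) := by
        rw [← Finset.mul_prod_erase _ _ (mem_univ (Sum.inl e.1)),
            ← Finset.mul_prod_erase _ _ hmemb]
      have hrest : (∏ v ∈ ((Finset.univ.erase (Sum.inl e.1)).erase (Sum.inr e.2)), (δ v).card)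
          = ∏ v ∈ ((Finset.univ.erase (Sum.inl e.1)).erase (Sum.inr e.2)), (ψ' v).card := by
        refine Finset.prod_congr rfl fun v hv => ?_
        have h2 := (Finset.mem_erase.mp hv).1
        have h1 := (Finset.mem_erase.mp ((Finset.mem_erase.mp hv).2)).1
        rw [hδo v h1 h2]
      rw [hsplitδ, hsplitψ, hrest, hψ'a, hψ'b, ← hca, ← hcb, hδa, hδb]
      simp only [Finset.card_singleton]
      ring
    have hcardge : ((Fintype.piFinset δ).card : ℝ)
        ≤ ((Φ.filter fun φ => π e (φ (Sum.inl e.1)) = φ (Sum.inr e.2)).card : ℝ) :=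
      Nat.cast_le.mpr (Finset.card_le_card hsub)
    have hPR : ((Fintype.piFinset δ).card : ℝ) * (ca * cb) = P := by exact_mod_cast hδcard
    have ht2 : t * t = 1 / (4 * γ) := by
      rw [htdef]; rw [div_mul_div_comm]; congr 1
      · ring
      · have := Real.mul_self_sqrt hγ.le; nlinarith
    have hcab : (ca : ℝ) * cb ≤ 1 / (4 * γ) := by
      rw [← ht2]
      exact mul_le_mul hcat hcbt (Nat.cast_nonneg _) ht0.le
    have hd : (0:ℝ) ≤ ((Fintype.piFinset δ).card : ℝ) := Nat.cast_nonneg _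
    have h1 : 4 * γ * ((ca:ℝ) * cb) ≤ 1 := by
      calc 4 * γ * ((ca:ℝ) * cb) ≤ 4 * γ * (1 / (4 * γ)) :=
            mul_le_mul_of_nonneg_left hcab (by positivity)
        _ = 1 := by field_simp
    have h3 : 4 * γ * (((Fintype.piFinset δ).card : ℝ) * ((ca:ℝ) * cb))
        ≤ ((Fintype.piFinset δ).card : ℝ) := by
      calc 4 * γ * (((Fintype.piFinset δ).card : ℝ) * ((ca:ℝ) * cb))
          = ((Fintype.piFinset δ).card : ℝ) * (4 * γ * ((ca:ℝ) * cb)) := by ring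
        _ ≤ ((Fintype.piFinset δ).card : ℝ) * 1 := mul_le_mul_of_nonneg_left h1 hd
        _ = ((Fintype.piFinset δ).card : ℝ) := mul_one _
    have h4 : (4 : ℝ) * γ * P ≤ ((Fintype.piFinset δ).card : ℝ) := by
      rw [← hPR]; exact h3
    linarith
  -- double counting
  have hswap : (∑ φ ∈ Φ, ((E.filter fun e => π e (φ (Sum.inl e.1)) = φ (Sum.inr e.2)).card))
      = ∑ e ∈ E, (Φ.filter fun φ => π e (φ (Sum.inl e.1)) = φ (Sum.inr e.2)).card := by
    simp only [Finset.card_filter]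
    exact Finset.sum_comm
  have hupper : ∀ φ ∈ Φ,
      ((E.filter fun e => π e (φ (Sum.inl e.1)) = φ (Sum.inr e.2)).card : ℝ) < γ * (n * D) := by
    intro φ _
    have h := hval φ
    have hE0 : (0:ℝ) < E.card := by
      rw [hEcard]; positivity
    rw [div_lt_iff₀ hE0] at h
    rw [hEcard] at h; push_cast at h; linarith
  have hΦne : Φ.Nonempty := Finset.card_pos.mp (by rw [hΦcard]; exact hP0)
  have hSup : (∑ φ ∈ Φ, ((E.filter fun e => π e (φ (Sum.inl e.1)) = φ (Sum.inr e.2)).card : ℝ))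
      < P * (γ * (n * D)) := by
    calc (∑ φ ∈ Φ, ((E.filter fun e => π e (φ (Sum.inl e.1)) = φ (Sum.inr e.2)).card : ℝ))
        < ∑ _φ ∈ Φ, γ * (n * D) := Finset.sum_lt_sum_of_nonempty hΦne hupper
      _ = P * (γ * (n * D)) := by rw [sum_const, nsmul_eq_mul, hΦcard]
  have hSlo : (0.26 : ℝ) * (n * D) * (4 * γ * P)
      ≤ (∑ φ ∈ Φ, ((E.filter fun e => π e (φ (Sum.inl e.1)) = φ (Sum.inr e.2)).card : ℝ)) := by
    have step1 : (∑ e ∈ Eg, ((Φ.filter fun φ => π e (φ (Sum.inl e.1)) = φ (Sum.inr e.2)).card : ℝ))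
        ≤ ∑ e ∈ E, ((Φ.filter fun φ => π e (φ (Sum.inl e.1)) = φ (Sum.inr e.2)).card : ℝ) :=
      Finset.sum_le_sum_of_subset_of_nonneg hEgsub (fun _ _ _ => Nat.cast_nonneg _)
    have step2 : (Eg.card : ℝ) * (4 * γ * P)
        ≤ ∑ e ∈ Eg, ((Φ.filter fun φ => π e (φ (Sum.inl e.1)) = φ (Sum.inr e.2)).card : ℝ) := by
      calc (Eg.card : ℝ) * (4 * γ * P) = ∑ _e ∈ Eg, (4 * γ * (P:ℝ)) := by
            rw [sum_const, nsmul_eq_mul]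
        _ ≤ _ := Finset.sum_le_sum hedge
    have step3 : (0.26 : ℝ) * (n * D) * (4 * γ * P) ≤ (Eg.card : ℝ) * (4 * γ * P) := by
      have h4 : (0:ℝ) ≤ 4 * γ * P := by positivity
      exact mul_le_mul_of_nonneg_right hEg h4
    have hcast : (∑ φ ∈ Φ, ((E.filter fun e => π e (φ (Sum.inl e.1)) = φ (Sum.inr e.2)).card : ℝ))
        = ∑ e ∈ E, ((Φ.filter fun φ => π e (φ (Sum.inl e.1)) = φ (Sum.inr e.2)).card : ℝ) := by
      exact_mod_cast congrArg (Nat.cast : ℕ → ℝ) hswap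
    rw [hcast]
    linarith
  have hnD : (0:ℝ) < (n : ℝ) * D := by
    have h1 : (0:ℝ) < (n:ℝ) := by exact_mod_cast hn
    have h2 : (0:ℝ) < (D:ℝ) := by exact_mod_cast hD
    positivity
  have hP0' : (0:ℝ) < (P:ℝ) := by exact_mod_cast hP0
  have hpos : (0:ℝ) < γ * ((n:ℝ) * D) * P := by positivity
  nlinarith [hSup, hSlo, hpos]
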